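/- Let M₀ and M₁ be n×n Hermitian positive definite complex matrices and define M₀ ♯_τ M₁ := M₀^{1/2} (M₀^{-1/2} M₁ M₀^{-1/2})^τ M₀^{1/2} for τ ∈ [0,1]. Then d_g(M₀, M₀ ♯_τ M₁) = τ · d_g(M₀, M₁) for every τ ∈ [0,1], where d_g(A, B) := ‖log(A^{-1/2} B A^{-1/2})‖_Fr. -/

import Mathlib

open Matrix Set
open scoped ComplexOrder

/-- Frobenius (Hilbert–Schmidt) norm of a complex matrix. -/
noncomputable def frob {n : ℕ} (M : Matrix (Fin n) (Fin n) ℂ) : ℝ :=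
  Real.sqrt (M * Mᴴ).trace.re

/-- The (Hermitian positive definite) square root of a Hermitian positive definite
matrix, via the continuous functional calculus. -/
noncomputable def msqrt {n : ℕ} (A : Matrix (Fin n) (Fin n) ℂ) : Matrix (Fin n) (Fin n) ℂ :=
  cfc Real.sqrt A

/-- `A^{-1/2}`, the inverse of the Hermitian square root. -/
noncomputable def minvsqrt {n : ℕ} (A : Matrix (Fin n) (Fin n) ℂ) : Matrix (Fin n) (Fin n) ℂ :=
  (msqrt A)⁻¹

/-- The unique Hermitian logarithm of a Hermitian positive definite matrix. -/
noncomputable def mlog {n : ℕ} (A : Matrix (Fin n) (Fin n) ℂ) : Matrix (Fin n) (Fin n) ℂ :=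
  cfc Real.log A

/-- Real power `A^t` of a Hermitian positive definite matrix, via the functional calculus. -/
noncomputable def mpow {n : ℕ} (A : Matrix (Fin n) (Fin n) ℂ) (t : ℝ) :
    Matrix (Fin n) (Fin n) ℂ :=
  cfc (fun x : ℝ => x ^ t) A

/-- The geodesic distance `d_g(A,B) = ‖log(A^{-1/2} B A^{-1/2})‖_Fr` on Hermitian
positive definite matrices. -/
noncomputable def dg {n : ℕ} (A B : Matrix (Fin n) (Fin n) ℂ) : ℝ :=
  frob (mlog (minvsqrt A * B * minvsqrt A))

/-- The geodesic `A ♯_τ B = A^{1/2} (A^{-1/2} B A^{-1/2})^τ A^{1/2}`. -/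
noncomputable def sharp {n : ℕ} (A B : Matrix (Fin n) (Fin n) ℂ) (τ : ℝ) :
    Matrix (Fin n) (Fin n) ℂ :=
  msqrt A * mpow (minvsqrt A * B * minvsqrt A) τ * msqrt A

section Aux

variable {n : ℕ}

/-- The real spectrum of a positive definite matrix is contained in the positive reals. -/
lemma spectrum_real_subset_Ioi {A : Matrix (Fin n) (Fin n) ℂ} (hA : A.PosDef) :
    spectrum ℝ A ⊆ Set.Ioi 0 := by
  rw [hA.1.spectrum_real_eq_range_eigenvalues]
  rintro x ⟨i, rfl⟩
  exact hA.eigenvalues_pos i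

lemma isSelfAdjoint_msqrt (A : Matrix (Fin n) (Fin n) ℂ) : IsSelfAdjoint (msqrt A) :=
  cfc_predicate Real.sqrt A

lemma isUnit_msqrt {A : Matrix (Fin n) (Fin n) ℂ} (hA : A.PosDef) : IsUnit (msqrt A) := by
  have hsa : IsSelfAdjoint A := hA.1.isSelfAdjoint
  have hsp : spectrum ℝ (msqrt A) = Real.sqrt '' spectrum ℝ A :=
    cfc_map_spectrum (f := Real.sqrt) (a := A) hsa Real.continuous_sqrt.continuousOn
  rw [← spectrum.zero_notMem_iff ℝ, hsp]
  rintro ⟨x, hx, hx0⟩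
  have hxpos : 0 < x := spectrum_real_subset_Ioi hA hx
  exact (Real.sqrt_pos.mpr hxpos).ne' hx0

/-- Positive definiteness is preserved under congruence by an invertible matrix. -/
lemma posDef_conj {M Q : Matrix (Fin n) (Fin n) ℂ} (hM : M.PosDef) (hQ : IsUnit Q) :
    (Qᴴ * M * Q).PosDef := by
  refine posDef_iff_dotProduct_mulVec.mpr ⟨isHermitian_conjTranspose_mul_mul Q hM.1, fun x hx => ?_⟩
  have hinj : Function.Injective (Q.mulVec) := mulVec_injective_iff_isUnit.mpr hQ
  have hQx : Q *ᵥ x ≠ 0 := fun h => hx (hinj (by simpa using h))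
  have := (posDef_iff_dotProduct_mulVec.mp hM).2 hQx
  simpa [star_mulVec, dotProduct_mulVec, vecMul_vecMul, Matrix.mul_assoc] using this

lemma frob_real_smul (τ : ℝ) (hτ : 0 ≤ τ) (L : Matrix (Fin n) (Fin n) ℂ) :
    frob (τ • L) = τ * frob L := by
  have h : (τ • L) * (τ • L)ᴴ = (τ ^ 2 : ℝ) • (L * Lᴴ) := by
    rw [conjTranspose_smul, star_trivial, Matrix.smul_mul, Matrix.mul_smul, smul_smul, sq]
  rw [frob, frob, h, trace_smul]
  have hre : ((τ ^ 2 : ℝ) • (L * Lᴴ).trace).re = τ ^ 2 * (L * Lᴴ).trace.re := by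
    simp [Complex.smul_re, ← Complex.ofReal_pow]
  rw [hre, Real.sqrt_mul (sq_nonneg τ), Real.sqrt_sq hτ]

lemma mlog_mpow {C : Matrix (Fin n) (Fin n) ℂ} (hC : C.PosDef) (τ : ℝ) :
    mlog (mpow C τ) = τ • mlog C := by
  have hsp := spectrum_real_subset_Ioi hC
  have hsa : IsSelfAdjoint C := hC.1.isSelfAdjoint
  have hf : ContinuousOn (fun x : ℝ => x ^ τ) (spectrum ℝ C) := fun x hx =>
    (Real.continuousAt_rpow_const x τ (Or.inl (hsp hx).ne')).continuousWithinAt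
  have hlogC : ContinuousOn Real.log (spectrum ℝ C) :=
    Real.continuousOn_log.mono fun x hx => (hsp hx).ne'
  have hg : ContinuousOn Real.log ((fun x : ℝ => x ^ τ) '' spectrum ℝ C) := by
    refine Real.continuousOn_log.mono ?_
    rintro y ⟨x, hx, rfl⟩
    exact (Real.rpow_pos_of_pos (hsp hx) τ).ne'
  rw [mpow, mlog, ← cfc_comp Real.log (fun x : ℝ => x ^ τ) C hsa hg hf, mlog,
    ← cfc_smul τ Real.log C hlogC]
  apply cfc_congr
  intro x hx
  simp [Function.comp, Real.log_rpow (hsp hx)]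

end Aux

theorem dg_sharp_eq_mul {n : ℕ} (M₀ M₁ : Matrix (Fin n) (Fin n) ℂ)
    (h₀ : M₀.PosDef) (h₁ : M₁.PosDef) :
    ∀ τ ∈ Set.Icc (0 : ℝ) 1, dg M₀ (sharp M₀ M₁ τ) = τ * dg M₀ M₁ := by
  intro τ hτ
  set S := msqrt M₀ with hSdef
  set Q := minvsqrt M₀ with hQdef
  have hS : IsUnit S := isUnit_msqrt h₀
  have hSd : IsUnit S.det := (isUnit_iff_isUnit_det S).mp hS
  have hQS : Q * S = 1 := nonsing_inv_mul S hSd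
  have hSQ : S * Q = 1 := mul_nonsing_inv S hSd
  have hQH : Q.IsHermitian := ((Matrix.IsHermitian.inv (isSelfAdjoint_msqrt M₀)))
  have hQunit : IsUnit Q := (Matrix.isUnit_nonsing_inv_iff).mpr hS
  set C := Q * M₁ * Q with hCdef
  have hC : C.PosDef := by
    have := posDef_conj h₁ hQunit
    rwa [hQH.eq] at this
  have key : Q * sharp M₀ M₁ τ * Q = mpow C τ := by
    rw [sharp, ← hSdef, ← hQdef, ← hCdef]
    have : Q * (S * mpow C τ * S) * Q = (Q * S) * (mpow C τ * (S * Q)) := by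
      simp only [Matrix.mul_assoc]
    rw [this, hQS, hSQ, Matrix.one_mul, Matrix.mul_one]
  have hdg1 : dg M₀ (sharp M₀ M₁ τ) = frob (mlog (mpow C τ)) := by
    rw [dg, ← hQdef, key]
  rw [hdg1, mlog_mpow hC τ, frob_real_smul τ hτ.1, dg, ← hQdef, ← hCdef]
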